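/- In the linear contract setting, the discretization error under uniform discretization {0, ε, 2ε, ..., 1} is at most ε: max_{α∈[0,1]} u(α) − max_{α∈{0,ε,...,1}} u(α) ≤ ε. -/
import Mathlib


/-- In the linear contract setting, the discretization error of the uniform
grid {0, ε, 2ε, ..., 1} is at most ε:
sup_{α∈[0,1]} u(α) − sup_{α∈{0,ε,...,1}} u(α) ≤ ε, where 1/ε = n is an integer. -/
theorem linear_contract_discretization_error
    {A : Type*} [Nonempty A]
    (V c : A → ℝ) (astar : ℝ → A)
    (hV : ∀ a, V a ∈ Set.Icc (0:ℝ) 1) (hc : ∀ a, 0 ≤ c a)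
    (hbr : ∀ (α : ℝ) (a : A), α * V a - c a ≤ α * V (astar α) - c (astar α))
    (u : ℝ → ℝ) (hu : ∀ α, u α = (1 - α) * V (astar α))
    (ε : ℝ) (hε : 0 < ε) (n : ℕ) (hn : 0 < n) (hnε : (n : ℝ) * ε = 1) :
    sSup (u '' Set.Icc 0 1) -
      sSup (u '' {x : ℝ | ∃ k : ℕ, k ≤ n ∧ x = (k : ℝ) * ε}) ≤ ε := by
  have lip : ∀ α β : ℝ, α ≤ β → α ≤ 1 → u α - u β ≤ β - α := by
    intro α β hab ha1
    rcases eq_or_lt_of_le hab with rfl | h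
    · simp [hu]
    · have h1 := hbr β (astar α)
      have h2 := hbr α (astar β)
      have hmono : V (astar α) ≤ V (astar β) := by nlinarith
      have hb1 := (hV (astar β)).2
      have hb0 := (hV (astar β)).1
      rw [hu, hu]
      nlinarith
  set S := {x : ℝ | ∃ k : ℕ, k ≤ n ∧ x = (k : ℝ) * ε} with hS
  have hSfin : S.Finite := by
    apply Set.Finite.subset ((Set.finite_Iic n).image (fun k : ℕ => (k : ℝ) * ε))
    rintro x ⟨k, hk, rfl⟩
    exact ⟨k, hk, rfl⟩
  have hbdd : BddAbove (u '' S) := (hSfin.image u).bddAbove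
  have key : sSup (u '' Set.Icc 0 1) ≤ sSup (u '' S) + ε := by
    apply csSup_le ((Set.nonempty_Icc.mpr zero_le_one).image u)
    rintro y ⟨α, ⟨h0, h1⟩, rfl⟩
    set k := ⌈α / ε⌉₊ with hk
    have hkn : k ≤ n := by
      apply Nat.ceil_le.mpr
      rw [div_le_iff₀ hε]
      linarith
    have hαβ : α ≤ (k : ℝ) * ε := by
      have := Nat.le_ceil (α / ε)
      calc α = (α / ε) * ε := by field_simp
        _ ≤ (k : ℝ) * ε := by nlinarith
    have hβα : (k : ℝ) * ε ≤ α + ε := by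
      have : (k : ℝ) < α / ε + 1 := by
        apply Nat.ceil_lt_add_one
        positivity
      have h' : (k : ℝ) * ε < (α / ε + 1) * ε := mul_lt_mul_of_pos_right this hε
      have h'' : (α / ε + 1) * ε = α + ε := by field_simp
      linarith
    have hlip := lip α ((k : ℝ) * ε) hαβ h1
    have hmem : u ((k : ℝ) * ε) ∈ u '' S := ⟨_, ⟨k, hkn, rfl⟩, rfl⟩
    have := le_csSup hbdd hmem
    linarith
  linarith
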